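/- α_min = P′(−∞) holds if and only if there exist i₀, i₁, ..., i_ℓ ∈ S (ℓ ≥ 1) with i₀ = i_ℓ such that φ(i_k, i_{k+1}) = α_min for all 0 ≤ k < ℓ; i.e., the minimum value of φ is attained along a cycle in S. -/

import Mathlib

open Filter Finset
open scoped NNReal

namespace AlphaMinAux

/-- Comparison: a subsolution is below a supersolution for a positive kernel. -/
lemma sub_le_super' {m : ℕ} (hm : 0 < m) (a : Fin m → Fin m → ℝ) (ha : ∀ i j, 0 < a i j)
    (u v : Fin m → ℝ) (hu : ∀ i, 0 < u i) (hv : ∀ i, 0 < v i)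
    (hsub : ∀ i, u i ^ 2 ≤ ∑ j, a i j * u j)
    (hsup : ∀ i, (∑ j, a i j * v j) ≤ v i ^ 2) :
    ∀ i, u i ≤ v i := by
  have hne : (univ : Finset (Fin m)).Nonempty := univ_nonempty_iff.2 ⟨⟨0, hm⟩⟩
  obtain ⟨i0, -, hmax⟩ := Finset.exists_max_image univ (fun i => u i / v i) hne
  set r := u i0 / v i0 with hr
  have hrpos : 0 < r := div_pos (hu i0) (hv i0)
  have hle : ∀ j, u j ≤ r * v j := by
    intro j
    have h := hmax j (mem_univ j)
    rwa [div_le_iff₀ (hv j)] at h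
  have key : u i0 ^ 2 ≤ r * v i0 ^ 2 := by
    calc u i0 ^ 2 ≤ ∑ j, a i0 j * u j := hsub i0
    _ ≤ ∑ j, a i0 j * (r * v j) := by
        apply Finset.sum_le_sum
        intro j _
        exact mul_le_mul_of_nonneg_left (hle j) (ha i0 j).le
    _ = r * ∑ j, a i0 j * v j := by rw [Finset.mul_sum]; congr 1; ext j; ring
    _ ≤ r * v i0 ^ 2 := mul_le_mul_of_nonneg_left (hsup i0) hrpos.le
  have hui0 : u i0 = r * v i0 := by rw [hr, div_mul_cancel₀ _ (hv i0).ne']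
  have hv2 : 0 < v i0 ^ 2 := pow_pos (hv i0) 2
  have hr2 : r ^ 2 ≤ r := by
    have h2 : r ^ 2 * v i0 ^ 2 ≤ r * v i0 ^ 2 := by
      calc r ^ 2 * v i0 ^ 2 = (r * v i0) ^ 2 := by ring
      _ = u i0 ^ 2 := by rw [hui0]
      _ ≤ r * v i0 ^ 2 := key
    exact le_of_mul_le_mul_right h2 hv2
  have hrle : r ≤ 1 := by nlinarith [hrpos]
  intro i
  calc u i ≤ r * v i := hle i
  _ ≤ 1 * v i := mul_le_mul_of_nonneg_right hrle (hv i).le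
  _ = v i := one_mul _


lemma abs_inf'_sub_inf'_le {m : ℕ} (hne : (univ : Finset (Fin m)).Nonempty)
    (f g : Fin m → ℝ) (c : ℝ) (h : ∀ j, |f j - g j| ≤ c) :
    |univ.inf' hne f - univ.inf' hne g| ≤ c := by
  rw [abs_sub_le_iff]
  constructor
  · obtain ⟨j0, -, hj0⟩ := Finset.exists_mem_eq_inf' hne g
    have h1 : univ.inf' hne f ≤ f j0 := Finset.inf'_le _ (mem_univ j0)
    have h2 := (abs_sub_le_iff.1 (h j0)).1
    linarith [hj0]
  · obtain ⟨j0, -, hj0⟩ := Finset.exists_mem_eq_inf' hne f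
    have h1 : univ.inf' hne g ≤ g j0 := Finset.inf'_le _ (mem_univ j0)
    have h2 := (abs_sub_le_iff.1 (h j0)).2
    linarith [hj0]

/-- Existence of a solution of the Bellman equation `2 β i = min_j (φ i j + β j)`. -/
lemma exists_bellman {m : ℕ} (hne : (univ : Finset (Fin m)).Nonempty) (φ : Fin m → Fin m → ℝ) :
    ∃ β : Fin m → ℝ, ∀ i, 2 * β i = univ.inf' hne (fun j => φ i j + β j) := by
  set T : (Fin m → ℝ) → (Fin m → ℝ) :=
    fun β i => (1/2 : ℝ) * univ.inf' hne (fun j => φ i j + β j) with hT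
  have hlip : LipschitzWith (1/2 : ℝ≥0) T := by
    apply LipschitzWith.of_dist_le_mul
    intro β γ
    rw [dist_pi_le_iff (by positivity)]
    intro i
    rw [Real.dist_eq, hT]
    simp only
    rw [← mul_sub, abs_mul]
    have h1 : |(1/2 : ℝ)| = ((1/2 : ℝ≥0) : ℝ) := by norm_num
    rw [h1]
    apply mul_le_mul_of_nonneg_left _ (by positivity)
    apply abs_inf'_sub_inf'_le
    intro j
    have : |β j - γ j| ≤ dist β γ := by
      rw [← Real.dist_eq]; exact dist_le_pi_dist β γ j
    calc |φ i j + β j - (φ i j + γ j)| = |β j - γ j| := by ring_nf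
    _ ≤ dist β γ := this
  have hcontr : ContractingWith (1/2 : ℝ≥0) T := ⟨by rw [← NNReal.coe_lt_coe]; norm_num, hlip⟩
  obtain ⟨β, hβ⟩ : ∃ β, T β = β := ⟨_, hcontr.fixedPoint_isFixedPt⟩
  refine ⟨β, fun i => ?_⟩
  have h := congrFun hβ i
  rw [hT] at h
  simp only at h
  linarith


/-- Hölder inequality for finite sums with two weights. -/
lemma holder_sum {m : ℕ} (A B : Fin m → ℝ) (hA : ∀ i, 0 < A i) (hB : ∀ i, 0 < B i)
    (a b : ℝ) (ha : 0 < a) (hb : 0 < b) (hab : a + b = 1) :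
    ∑ i, A i ^ a * B i ^ b ≤ (∑ i, A i) ^ a * (∑ i, B i) ^ b := by
  rcases Nat.eq_zero_or_pos m with hm | hm
  · subst hm
    simp [Real.zero_rpow ha.ne', Real.zero_rpow hb.ne']
  have hne : (univ : Finset (Fin m)).Nonempty := univ_nonempty_iff.2 ⟨⟨0, hm⟩⟩
  set SA := ∑ i, A i with hSA
  set SB := ∑ i, B i with hSB
  have hSApos : 0 < SA := Finset.sum_pos (fun i _ => hA i) hne
  have hSBpos : 0 < SB := Finset.sum_pos (fun i _ => hB i) hne
  have key : ∀ i, A i ^ a * B i ^ b ≤ SA ^ a * SB ^ b * (a * (A i / SA) + b * (B i / SB)) := by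
    intro i
    have h1 : (A i / SA) ^ a * (B i / SB) ^ b ≤ a * (A i / SA) + b * (B i / SB) :=
      Real.geom_mean_le_arith_mean2_weighted ha.le hb.le
        (div_nonneg (hA i).le hSApos.le) (div_nonneg (hB i).le hSBpos.le) hab
    have h2 : (A i / SA) ^ a * (B i / SB) ^ b
        = A i ^ a * B i ^ b / (SA ^ a * SB ^ b) := by
      rw [Real.div_rpow (hA i).le hSApos.le, Real.div_rpow (hB i).le hSBpos.le]
      field_simp
    rw [h2] at h1
    have hpos : 0 < SA ^ a * SB ^ b :=
      mul_pos (Real.rpow_pos_of_pos hSApos a) (Real.rpow_pos_of_pos hSBpos b)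
    calc A i ^ a * B i ^ b = SA ^ a * SB ^ b * (A i ^ a * B i ^ b / (SA ^ a * SB ^ b)) := by
          field_simp
    _ ≤ SA ^ a * SB ^ b * (a * (A i / SA) + b * (B i / SB)) :=
        mul_le_mul_of_nonneg_left h1 hpos.le
  calc ∑ i, A i ^ a * B i ^ b
      ≤ ∑ i, SA ^ a * SB ^ b * (a * (A i / SA) + b * (B i / SB)) :=
        Finset.sum_le_sum (fun i _ => key i)
  _ = SA ^ a * SB ^ b * (a * (∑ i, A i) / SA + b * (∑ i, B i) / SB) := by
      rw [← Finset.mul_sum]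
      congr 1
      rw [Finset.sum_add_distrib, ← Finset.mul_sum, ← Finset.mul_sum, ← Finset.sum_div,
        ← Finset.sum_div]
      ring
  _ = SA ^ a * SB ^ b := by
      rw [← hSA, ← hSB]
      field_simp
      linarith

section Bounds

variable {m : ℕ} (hm : 0 < m) (φ : Fin m → Fin m → ℝ)
    (t : ℝ → Fin m → ℝ) (ht : ∀ s i, 0 < t s i)
    (heq : ∀ s i, (t s i) ^ 2 = ∑ j, Real.exp (s * φ i j) * t s j)
    (hne : (univ : Finset (Fin m)).Nonempty)
    (β : Fin m → ℝ) (hβ : ∀ i, 2 * β i = univ.inf' hne (fun j => φ i j + β j))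

include hm ht heq hβ

lemma t_lower : ∀ s ≤ (0:ℝ), ∀ i, Real.exp (s * β i) ≤ t s i := by
  intro s hs
  apply sub_le_super' hm (fun i j => Real.exp (s * φ i j)) (fun i j => Real.exp_pos _)
    _ _ (fun i => Real.exp_pos _) (ht s) _ (fun i => (heq s i).ge)
  intro i
  obtain ⟨j0, -, hj0⟩ := Finset.exists_mem_eq_inf' hne (fun j => φ i j + β j)
  have h1 : Real.exp (s * β i) ^ 2 = Real.exp (s * φ i j0) * Real.exp (s * β j0) := by
    rw [sq, ← Real.exp_add, ← Real.exp_add]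
    congr 1
    have h2 : 2 * β i = φ i j0 + β j0 := by rw [hβ i, hj0]
    nlinarith [h2]
  rw [h1]
  exact Finset.single_le_sum
    (f := fun j => Real.exp (s * φ i j) * Real.exp (s * β j))
    (fun j _ => by positivity) (mem_univ j0)

lemma t_upper : ∀ s ≤ (0:ℝ), ∀ i, t s i ≤ m * Real.exp (s * β i) := by
  intro s hs
  have hmr : (1:ℝ) ≤ m := by exact_mod_cast hm
  apply sub_le_super' hm (fun i j => Real.exp (s * φ i j)) (fun i j => Real.exp_pos _)
    _ _ (ht s) (fun i => by positivity) (fun i => (heq s i).le)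
  intro i
  have hterm : ∀ j, Real.exp (s * φ i j) * (m * Real.exp (s * β j))
      ≤ m * Real.exp (s * (2 * β i)) := by
    intro j
    have hineq : 2 * β i ≤ φ i j + β j := by
      rw [hβ i]; exact Finset.inf'_le _ (mem_univ j)
    have h3 : s * (φ i j + β j) ≤ s * (2 * β i) := mul_le_mul_of_nonpos_left hineq hs
    calc Real.exp (s * φ i j) * (m * Real.exp (s * β j))
        = m * Real.exp (s * (φ i j + β j)) := by
          rw [mul_add s, Real.exp_add]; ring
    _ ≤ m * Real.exp (s * (2 * β i)) := by
        apply mul_le_mul_of_nonneg_left (Real.exp_le_exp.2 h3) (by positivity)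
  calc ∑ j, Real.exp (s * φ i j) * (m * Real.exp (s * β j))
      ≤ ∑ _j : Fin m, (m:ℝ) * Real.exp (s * (2 * β i)) :=
        Finset.sum_le_sum (fun j _ => hterm j)
  _ = m * (m * Real.exp (s * (2 * β i))) := by
      rw [Finset.sum_const, card_univ, Fintype.card_fin]; simp [nsmul_eq_mul]
  _ = (m * Real.exp (s * β i)) ^ 2 := by
      have : s * (2 * β i) = s * β i + s * β i := by ring
      rw [this, Real.exp_add]; ring

end Bounds


lemma sq_rpow (x : ℝ) (hx : 0 ≤ x) (a : ℝ) : (x ^ 2) ^ a = (x ^ a) ^ 2 := by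
  rw [← Real.rpow_natCast x 2, ← Real.rpow_natCast (x ^ a) 2, ← Real.rpow_mul hx,
    ← Real.rpow_mul hx, mul_comm]

section PBounds

variable {m : ℕ} (hm : 0 < m) (φ : Fin m → Fin m → ℝ)
    (t : ℝ → Fin m → ℝ) (ht : ∀ s i, 0 < t s i)
    (heq : ∀ s i, (t s i) ^ 2 = ∑ j, Real.exp (s * φ i j) * t s j)
    (hne : (univ : Finset (Fin m)).Nonempty)
    (β : Fin m → ℝ) (hβ : ∀ i, 2 * β i = univ.inf' hne (fun j => φ i j + β j))
    (P : ℝ → ℝ) (hP : ∀ s, P s = Real.log (∑ i, t s i))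

include hm ht heq hβ

include hP

lemma P_bounds :
    ∀ s ≤ (0:ℝ), univ.inf' hne β * s ≤ P s ∧ P s ≤ univ.inf' hne β * s + 2 * Real.log m := by
  intro s hs
  set b := univ.inf' hne β with hb
  have hsum_pos : 0 < ∑ i, t s i := Finset.sum_pos (fun i _ => ht s i) hne
  constructor
  · obtain ⟨ib, -, hib⟩ := Finset.exists_mem_eq_inf' hne β
    have h1 : Real.exp (s * b) ≤ ∑ i, t s i := by
      calc Real.exp (s * b) = Real.exp (s * β ib) := by rw [hb, hib]
      _ ≤ t s ib := t_lower hm φ t ht heq hne β hβ s hs ib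
      _ ≤ ∑ i, t s i := Finset.single_le_sum (fun i _ => (ht s i).le) (mem_univ ib)
    rw [hP s]
    calc b * s = Real.log (Real.exp (s * b)) := by rw [Real.log_exp]; ring
    _ ≤ Real.log (∑ i, t s i) := Real.log_le_log (Real.exp_pos _) h1
  · have h2 : ∑ i, t s i ≤ m * m * Real.exp (s * b) := by
      calc ∑ i, t s i ≤ ∑ i, (m:ℝ) * Real.exp (s * β i) :=
            Finset.sum_le_sum (fun i _ => t_upper hm φ t ht heq hne β hβ s hs i)
      _ ≤ ∑ _i : Fin m, (m:ℝ) * Real.exp (s * b) := by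
          apply Finset.sum_le_sum
          intro i _
          have : s * β i ≤ s * b := by
            apply mul_le_mul_of_nonpos_left _ hs
            exact Finset.inf'_le _ (mem_univ i)
          exact mul_le_mul_of_nonneg_left (Real.exp_le_exp.2 this) (by positivity)
      _ = m * m * Real.exp (s * b) := by
          rw [Finset.sum_const, card_univ, Fintype.card_fin, nsmul_eq_mul]; ring
    rw [hP s]
    have hmr : (1:ℝ) ≤ m := by exact_mod_cast hm
    calc Real.log (∑ i, t s i) ≤ Real.log (m * m * Real.exp (s * b)) :=
          Real.log_le_log hsum_pos h2
    _ = Real.log m + Real.log m + (s * b) := by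
        rw [Real.log_mul (by positivity) (Real.exp_pos _).ne', Real.log_mul (by positivity)
          (by positivity), Real.log_exp]
    _ = b * s + 2 * Real.log m := by ring

include hP in
lemma P_convex : ConvexOn ℝ Set.univ P := by
  refine ⟨convex_univ, fun x _ y _ a b ha hb hab => ?_⟩
  rcases eq_or_lt_of_le ha with ha0 | ha
  · simp [← ha0, (show b = 1 by linarith)]
  rcases eq_or_lt_of_le hb with hb0 | hb
  · simp [← hb0, (show a = 1 by linarith)]
  set sbar := a • x + b • y with hsbar
  set w : Fin m → ℝ := fun i => t x i ^ a * t y i ^ b with hw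
  have hwpos : ∀ i, 0 < w i := fun i =>
    mul_pos (Real.rpow_pos_of_pos (ht x i) a) (Real.rpow_pos_of_pos (ht y i) b)
  have hsup : ∀ i, (∑ j, Real.exp (sbar * φ i j) * w j) ≤ w i ^ 2 := by
    intro i
    have hterm : ∀ j, Real.exp (sbar * φ i j) * w j
        = (Real.exp (x * φ i j) * t x j) ^ a * (Real.exp (y * φ i j) * t y j) ^ b := by
      intro j
      rw [Real.mul_rpow (Real.exp_pos _).le (ht x j).le,
        Real.mul_rpow (Real.exp_pos _).le (ht y j).le]
      have hexp : Real.exp (sbar * φ i j)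
          = Real.exp (x * φ i j) ^ a * Real.exp (y * φ i j) ^ b := by
        rw [← Real.exp_mul, ← Real.exp_mul, ← Real.exp_add, hsbar, smul_eq_mul, smul_eq_mul]
        ring_nf
      rw [hexp, hw]
      ring
    calc ∑ j, Real.exp (sbar * φ i j) * w j
        = ∑ j, (Real.exp (x * φ i j) * t x j) ^ a * (Real.exp (y * φ i j) * t y j) ^ b := by
          exact Finset.sum_congr rfl (fun j _ => hterm j)
    _ ≤ (∑ j, Real.exp (x * φ i j) * t x j) ^ a * (∑ j, Real.exp (y * φ i j) * t y j) ^ b :=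
          holder_sum _ _ (fun j => mul_pos (Real.exp_pos _) (ht x j))
            (fun j => mul_pos (Real.exp_pos _) (ht y j)) a b ha hb hab
    _ = (t x i ^ 2) ^ a * (t y i ^ 2) ^ b := by rw [← heq x i, ← heq y i]
    _ = w i ^ 2 := by
        rw [hw]
        simp only
        rw [sq_rpow _ (ht x i).le, sq_rpow _ (ht y i).le]
        ring
  have hcomp : ∀ i, t sbar i ≤ w i :=
    sub_le_super' hm (fun i j => Real.exp (sbar * φ i j)) (fun i j => Real.exp_pos _)
      (t sbar) w (ht sbar) hwpos (fun i => (heq sbar i).le) hsup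
  have hsum : ∑ i, t sbar i ≤ (∑ i, t x i) ^ a * (∑ i, t y i) ^ b := by
    calc ∑ i, t sbar i ≤ ∑ i, w i := Finset.sum_le_sum (fun i _ => hcomp i)
    _ ≤ (∑ i, t x i) ^ a * (∑ i, t y i) ^ b :=
        holder_sum _ _ (ht x) (ht y) a b ha hb hab
  rw [hP, hP, hP]
  calc Real.log (∑ i, t sbar i) ≤ Real.log ((∑ i, t x i) ^ a * (∑ i, t y i) ^ b) :=
        Real.log_le_log (Finset.sum_pos (fun i _ => ht sbar i) hne) hsum
  _ = a * Real.log (∑ i, t x i) + b * Real.log (∑ i, t y i) := by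
      rw [Real.log_mul, Real.log_rpow, Real.log_rpow]
      · exact Finset.sum_pos (fun i _ => ht y i) hne
      · exact Finset.sum_pos (fun i _ => ht x i) hne
      · exact (Real.rpow_pos_of_pos (Finset.sum_pos (fun i _ => ht x i) hne) a).ne'
      · exact (Real.rpow_pos_of_pos (Finset.sum_pos (fun i _ => ht y i) hne) b).ne'
  _ = a • Real.log (∑ i, t x i) + b • Real.log (∑ i, t y i) := by simp [smul_eq_mul]

end PBounds


/-- The increment function. -/
noncomputable def σf (P : ℝ → ℝ) (s : ℝ) : ℝ := P s - P (s - 1)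

section Deriv

variable {P : ℝ → ℝ} {b C : ℝ} (hconv : ConvexOn ℝ Set.univ P)
  (hbnd : ∀ s ≤ (0:ℝ), b * s ≤ P s ∧ P s ≤ b * s + C)

include hconv

lemma σf_mono : Monotone (σf P) := by
  intro x y hxy
  rcases eq_or_lt_of_le hxy with rfl | hxy
  · exact le_refl _
  have h1 := hconv.secant_mono (a := x - 1) (x := x) (y := y) (Set.mem_univ _) (Set.mem_univ _)
    (Set.mem_univ _) (by intro h; linarith)
    (by intro h; linarith) hxy.le
  have h2 := hconv.secant_mono (a := y) (x := x - 1) (y := y - 1) (Set.mem_univ _)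
    (Set.mem_univ _) (Set.mem_univ _) (by intro h; linarith)
    (by intro h; linarith) (by linarith)
  have e1 : x - (x - 1) = 1 := by ring
  rw [e1, div_one] at h1
  have e2 : y - 1 - y = -1 := by ring
  rw [e2] at h2
  have e3 : (P (y - 1) - P y) / (-1 : ℝ) = P y - P (y - 1) := by ring
  rw [e3] at h2
  have e4 : (P (x - 1) - P y) / (x - 1 - y) = (P y - P (x - 1)) / (y - (x - 1)) := by
    rw [← neg_div_neg_eq]; ring_nf
  rw [e4] at h2
  exact le_trans h1 h2

lemma σf_slope_le {x y : ℝ} (hxy : x < y) :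
    σf P x ≤ (P y - P x) / (y - x) := by
  have h1 := hconv.secant_mono (a := x) (x := x - 1) (y := y) (Set.mem_univ _) (Set.mem_univ _)
    (Set.mem_univ _) (by intro h; rw [sub_eq_iff_eq_add] at h; linarith)
    (ne_of_gt hxy) (by linarith)
  have e1 : x - 1 - x = -1 := by ring
  rw [e1] at h1
  have e2 : (P (x - 1) - P x) / (-1 : ℝ) = σf P x := by rw [σf]; ring
  rw [e2] at h1
  exact h1

lemma slope_le_σf {x z : ℝ} (hxz : x < z) (hz1 : z ≤ x + 1) :
    (P z - P x) / (z - x) ≤ σf P (x + 1) := by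
  have h2 := hconv.secant_mono (a := x) (x := z) (y := x + 1) (Set.mem_univ _)
    (Set.mem_univ _) (Set.mem_univ _) (ne_of_gt hxz) (by intro h; linarith) hz1
  have e2 : x + 1 - x = 1 := by ring
  rw [e2, div_one] at h2
  have e3 : P (x + 1) - P x = σf P (x + 1) := by rw [σf]; ring_nf
  rw [e3] at h2
  exact h2

omit hconv

lemma telescope (s : ℝ) : ∀ n : ℕ, P s - P (s - n) = ∑ k ∈ Finset.range n, σf P (s - k) := by
  intro n
  induction n with
  | zero => simp
  | succ n ih =>
    rw [Finset.sum_range_succ, ← ih, σf]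
    push_cast
    ring_nf

include hconv hbnd

lemma σf_ge : ∀ s, b ≤ σf P s := by
  have key : ∀ s ≤ (0:ℝ), b ≤ σf P s := by
    intro s hs
    by_contra hlt
    push_neg at hlt
    have hub : ∀ n : ℕ, (n : ℝ) * b - C ≤ n * σf P s := by
      intro n
      have h1 : P s - P (s - n) ≤ n * σf P s := by
        rw [telescope s n]
        calc ∑ k ∈ Finset.range n, σf P (s - k) ≤ ∑ _k ∈ Finset.range n, σf P s :=
              Finset.sum_le_sum (fun k _ => σf_mono hconv (by
                have : (0:ℝ) ≤ k := Nat.cast_nonneg k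
                linarith))
        _ = n * σf P s := by rw [Finset.sum_const, Finset.card_range, nsmul_eq_mul]
      have h2 : (n:ℝ) * b - C ≤ P s - P (s - n) := by
        have hb1 := (hbnd s hs).1
        have hb2 := (hbnd (s - n) (by
          have : (0:ℝ) ≤ n := Nat.cast_nonneg n
          linarith)).2
        nlinarith [hb1, hb2]
      linarith
    obtain ⟨n, hn⟩ := exists_nat_gt (C / (b - σf P s))
    have hpos : 0 < b - σf P s := by linarith
    have := hub n
    rw [div_lt_iff₀ hpos] at hn
    nlinarith
  intro s
  rcases le_or_gt s 0 with hs | hs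
  · exact key s hs
  · exact le_trans (key 0 le_rfl) (σf_mono hconv hs.le)

lemma σf_tendsto : Tendsto (σf P) atBot (nhds b) := by
  rw [Metric.tendsto_nhds]
  intro ε hε
  have hex : ∃ s0 : ℝ, s0 ≤ 0 ∧ σf P s0 < b + ε := by
    by_contra hcon
    push_neg at hcon
    have hub : ∀ n : ℕ, (n:ℝ) * (b + ε) ≤ (n:ℝ) * b + C := by
      intro n
      have h1 : (n:ℝ) * (b + ε) ≤ P 0 - P (0 - n) := by
        rw [telescope 0 n]
        calc (n:ℝ) * (b + ε) = ∑ _k ∈ Finset.range n, (b + ε) := by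
              rw [Finset.sum_const, Finset.card_range, nsmul_eq_mul]
        _ ≤ ∑ k ∈ Finset.range n, σf P ((0:ℝ) - k) :=
            Finset.sum_le_sum (fun k _ => hcon _ (by
              have : (0:ℝ) ≤ k := Nat.cast_nonneg k
              linarith))
      have h2 : P 0 - P (0 - n) ≤ (n:ℝ) * b + C := by
        have hb1 := (hbnd 0 le_rfl).2
        have hb2 := (hbnd (0 - n) (by
          have : (0:ℝ) ≤ n := Nat.cast_nonneg n
          linarith)).1
        nlinarith [hb1, hb2]
      linarith
    obtain ⟨n, hn⟩ := exists_nat_gt (C / ε)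
    have := hub n
    rw [div_lt_iff₀ hε] at hn
    nlinarith
  obtain ⟨s0, hs0, hlt⟩ := hex
  filter_upwards [eventually_le_atBot s0] with s hs
  rw [Real.dist_eq, abs_lt]
  constructor
  · have := σf_ge hconv hbnd s
    linarith
  · have := σf_mono hconv hs
    linarith

lemma Q_mono : Monotone (fun s => P s - b * s) := by
  intro x y hxy
  rcases eq_or_lt_of_le hxy with rfl | hxy
  · exact le_refl _
  simp only
  have h1 : b ≤ (P y - P x) / (y - x) :=
    le_trans (σf_ge hconv hbnd x) (σf_slope_le hconv hxy)
  rw [le_div_iff₀ (by linarith : (0:ℝ) < y - x)] at h1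
  nlinarith

lemma freq_diff : ∃ᶠ s in atBot, DifferentiableAt ℝ P s := by
  have hQ := (Q_mono hconv hbnd).ae_differentiableAt
  rw [Filter.frequently_atBot]
  intro M
  rw [MeasureTheory.ae_iff] at hQ
  by_contra hcon
  push_neg at hcon
  have hsub : Set.Iic M ⊆ {x | ¬ DifferentiableAt ℝ (fun s => P s - b * s) x} := by
    intro x hx
    intro hd
    have hPd : DifferentiableAt ℝ P x := by
      have : P = fun s => (P s - b * s) + b * s := by funext s; ring
      rw [this]
      exact hd.add ((differentiableAt_const b).mul differentiableAt_id)
    exact hcon x hx hPd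
  have := MeasureTheory.measure_mono_null hsub hQ
  rw [Real.volume_Iic] at this
  exact (by simp : (⊤ : ENNReal) ≠ 0) this

lemma deriv_between {s : ℝ} (hd : DifferentiableAt ℝ P s) :
    σf P s ≤ deriv P s ∧ deriv P s ≤ σf P (s + 1) := by
  have h := hd.hasDerivAt
  rw [hasDerivAt_iff_tendsto_slope] at h
  have h' : Tendsto (slope P s) (nhdsWithin s (Set.Ioi s)) (nhds (deriv P s)) :=
    h.mono_left (nhdsWithin_mono s (fun z hz => ne_of_gt hz))
  constructor
  · refine ge_of_tendsto h' ?_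
    filter_upwards [self_mem_nhdsWithin] with z hz
    rw [slope_def_field]
    exact σf_slope_le hconv (hz : s < z)
  · refine le_of_tendsto h' ?_
    have hIoo : Set.Ioo s (s + 1) ∈ nhdsWithin s (Set.Ioi s) :=
      Ioo_mem_nhdsGT_of_mem ⟨le_refl s, by linarith⟩
    filter_upwards [hIoo] with z hz
    rw [slope_def_field]
    exact slope_le_σf hconv hz.1 hz.2.le

lemma Pm_eq {Pm : ℝ} (hPm : Tendsto (deriv P) atBot (nhds Pm)) : Pm = b := by
  set l := atBot ⊓ Filter.principal {s | DifferentiableAt ℝ P s} with hl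
  have hne : l.NeBot := by
    rw [hl, ← Filter.frequently_iff_neBot]
    exact freq_diff hconv hbnd
  have h1 : Tendsto (deriv P) l (nhds Pm) := hPm.mono_left inf_le_left
  have h2 : Tendsto (σf P) l (nhds b) := (σf_tendsto hconv hbnd).mono_left inf_le_left
  have h3 : Tendsto (fun s => σf P (s + 1)) l (nhds b) := by
    apply Tendsto.comp (σf_tendsto hconv hbnd)
    exact (tendsto_atBot_add_const_right _ 1 tendsto_id).mono_left inf_le_left
  have hev : ∀ᶠ s in l, DifferentiableAt ℝ P s := by
    rw [hl]
    exact Filter.eventually_inf_principal.2 (Filter.Eventually.of_forall (fun s hs => hs))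
  have hle1 : b ≤ Pm := by
    apply le_of_tendsto_of_tendsto h2 h1
    filter_upwards [hev] with s hs
    exact (deriv_between hconv hbnd hs).1
  have hle2 : Pm ≤ b := by
    apply le_of_tendsto_of_tendsto h1 h3
    filter_upwards [hev] with s hs
    exact (deriv_between hconv hbnd hs).2
  linarith

end Deriv


section Cycle

variable {m : ℕ} {φ : Fin m → Fin m → ℝ} (hne : (univ : Finset (Fin m)).Nonempty)
  {β : Fin m → ℝ} (hβ : ∀ i, 2 * β i = univ.inf' hne (fun j => φ i j + β j))
  {αmin : ℝ} (hlb : ∀ i j, αmin ≤ φ i j)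

include hβ hlb

lemma alpha_le_b : αmin ≤ univ.inf' hne β := by
  obtain ⟨ib, -, hib⟩ := Finset.exists_mem_eq_inf' hne β
  obtain ⟨j0, -, hj0⟩ := Finset.exists_mem_eq_inf' hne (fun j => φ ib j + β j)
  have h1 : 2 * β ib = φ ib j0 + β j0 := by rw [hβ ib, hj0]
  have h2 : univ.inf' hne β ≤ β j0 := Finset.inf'_le _ (mem_univ j0)
  have h3 := hlb ib j0
  linarith

/-- If there is a cycle on which `φ` equals `αmin`, then `inf β ≤ αmin`. -/
lemma b_le_alpha_of_cycle (ℓ : ℕ) (c : ℕ → Fin m) (hℓ : 1 ≤ ℓ) (hc : c 0 = c ℓ)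
    (hcyc : ∀ k < ℓ, φ (c k) (c (k + 1)) = αmin) :
    univ.inf' hne β ≤ αmin := by
  set p : ℕ → Fin m := fun k => c (k % ℓ) with hp
  have hedge : ∀ k, φ (p k) (p (k + 1)) = αmin := by
    intro k
    have hmod : k % ℓ < ℓ := Nat.mod_lt k hℓ
    have hkey : (k + 1) % ℓ = (k % ℓ + 1) % ℓ := by
      conv_lhs => rw [← Nat.mod_add_mod]
    show φ (c (k % ℓ)) (c ((k + 1) % ℓ)) = αmin
    have hsucc := Nat.succ_le_of_lt hmod
    rcases eq_or_lt_of_le hsucc with heq | hlt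
    · have heq' : k % ℓ + 1 = ℓ := heq
      have h1 : (k + 1) % ℓ = 0 := by rw [hkey, heq', Nat.mod_self]
      rw [h1, hc]
      have h2 := hcyc (k % ℓ) hmod
      rwa [heq'] at h2
    · have h1 : (k + 1) % ℓ = k % ℓ + 1 := by rw [hkey]; exact Nat.mod_eq_of_lt hlt
      rw [h1]
      exact hcyc (k % ℓ) hmod
  -- iterate the Bellman inequality
  have hstep : ∀ k, β (p k) ≤ (αmin + β (p (k + 1))) / 2 := by
    intro k
    have h1 : 2 * β (p k) ≤ φ (p k) (p (k + 1)) + β (p (k + 1)) := by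
      rw [hβ (p k)]
      exact Finset.inf'_le _ (mem_univ _)
    rw [hedge k] at h1
    linarith
  have hiter : ∀ n : ℕ, β (p 0) ≤ (1 - (1/2)^n) * αmin + (1/2)^n * β (p n) := by
    intro n
    induction n with
    | zero => simp
    | succ n ih =>
      have h2 := hstep n
      have h3 : (1/2:ℝ)^n * β (p n) ≤ (1/2)^n * ((αmin + β (p (n + 1))) / 2) :=
        mul_le_mul_of_nonneg_left h2 (by positivity)
      calc β (p 0) ≤ (1 - (1/2)^n) * αmin + (1/2)^n * β (p n) := ih
      _ ≤ (1 - (1/2)^n) * αmin + (1/2)^n * ((αmin + β (p (n + 1))) / 2) := by linarith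
      _ = (1 - (1/2)^(n+1)) * αmin + (1/2)^(n+1) * β (p (n + 1)) := by ring
  have hB : ∀ n, β (p n) ≤ univ.sup' hne β := fun n => Finset.le_sup' _ (mem_univ _)
  have hβp0 : β (p 0) ≤ αmin := by
    set B := univ.sup' hne β with hBdef
    have hseq : ∀ n : ℕ, β (p 0) ≤ (1 - (1/2)^n) * αmin + (1/2)^n * B := by
      intro n
      calc β (p 0) ≤ (1 - (1/2)^n) * αmin + (1/2)^n * β (p n) := hiter n
      _ ≤ (1 - (1/2)^n) * αmin + (1/2)^n * B :=
        add_le_add (le_refl _) (mul_le_mul_of_nonneg_left (hB n) (by positivity))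
    have hlim : Tendsto (fun n : ℕ => (1 - (1/2:ℝ)^n) * αmin + (1/2:ℝ)^n * B)
        atTop (nhds αmin) := by
      have hpow : Tendsto (fun n : ℕ => (1/2:ℝ)^n) atTop (nhds 0) :=
        tendsto_pow_atTop_nhds_zero_of_lt_one (by norm_num) (by norm_num)
      have := ((hpow.const_sub 1).mul_const αmin).add (hpow.mul_const B)
      simpa using this
    exact ge_of_tendsto hlim (Filter.Eventually.of_forall hseq)
  calc univ.inf' hne β ≤ β (p 0) := Finset.inf'_le _ (mem_univ _)
  _ ≤ αmin := hβp0

/-- If `inf β = αmin` then there is a cycle on which `φ` equals `αmin`. -/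
lemma cycle_of_b_eq_alpha (hb : univ.inf' hne β = αmin) :
    ∃ (ℓ : ℕ) (c : ℕ → Fin m), 1 ≤ ℓ ∧ c 0 = c ℓ ∧
      ∀ k < ℓ, φ (c k) (c (k + 1)) = αmin := by
  have hbound : ∀ i, αmin ≤ β i := by
    intro i
    rw [← hb]
    exact Finset.inf'_le _ (mem_univ i)
  -- successor function
  have hsucc : ∀ i, β i = αmin → ∃ j, φ i j = αmin ∧ β j = αmin := by
    intro i hi
    obtain ⟨j0, -, hj0⟩ := Finset.exists_mem_eq_inf' hne (fun j => φ i j + β j)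
    have h1 : 2 * β i = φ i j0 + β j0 := by rw [hβ i, hj0]
    have h2 := hlb i j0
    have h3 := hbound j0
    exact ⟨j0, by linarith, by linarith⟩
  choose g hg1 hg2 using hsucc
  -- pick a starting point with β = αmin
  obtain ⟨i0, -, hi0⟩ := Finset.exists_mem_eq_inf' hne β
  rw [hb] at hi0
  -- the orbit; we need a total successor function
  classical
  set G : Fin m → Fin m := fun i => if h : β i = αmin then g i h else i with hG
  set o : ℕ → Fin m := fun k => G^[k] i0 with ho
  have horb : ∀ k, β (o k) = αmin ∧ φ (o k) (o (k + 1)) = αmin := by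
    have hmem : ∀ k, β (o k) = αmin := by
      intro k
      induction k with
      | zero => simpa [ho] using hi0.symm
      | succ k ih =>
        have h0 : o (k + 1) = G (o k) := Function.iterate_succ_apply' G k i0
        rw [h0, hG]
        simp only [ih, dif_pos]
        exact hg2 _ ih
    intro k
    refine ⟨hmem k, ?_⟩
    have h1 : o (k + 1) = G (o k) := Function.iterate_succ_apply' G k i0
    rw [h1, hG]
    simp only [hmem k, dif_pos]
    exact hg1 _ (hmem k)
  -- pigeonhole
  obtain ⟨x, y, hxy, hoxy⟩ := Finite.exists_ne_map_eq_of_infinite o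
  rcases lt_or_gt_of_ne hxy with hlt | hlt
  · refine ⟨y - x, fun k => o (x + k), ?_, ?_, ?_⟩
    · omega
    · simp only [Nat.add_zero]
      rw [show x + (y - x) = y by omega]
      exact hoxy
    · intro k _
      show φ (o (x + k)) (o (x + (k + 1))) = αmin
      rw [show x + (k + 1) = (x + k) + 1 by omega]
      exact (horb (x + k)).2
  · refine ⟨x - y, fun k => o (y + k), ?_, ?_, ?_⟩
    · omega
    · simp only [Nat.add_zero]
      rw [show y + (x - y) = x by omega]
      exact hoxy.symm
    · intro k _
      show φ (o (y + k)) (o (y + (k + 1))) = αmin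
      rw [show y + (k + 1) = (y + k) + 1 by omega]
      exact (horb (y + k)).2

end Cycle


end AlphaMinAux

/-- `α_min = P′(-∞)` if and only if the minimum value `α_min` of `φ` is attained along a
cycle `i₀, i₁, ..., i_ℓ` in `S` (with `i₀ = i_ℓ`, `ℓ ≥ 1`). -/
theorem alpha_min_eq_deriv_pressure_at_bot_iff_cycle
    (m : ℕ) (hm : 2 ≤ m) (φ : Fin m → Fin m → ℝ)
    (hφ : ∃ i j k l, φ i j ≠ φ k l)
    (t : ℝ → Fin m → ℝ) (ht : ∀ s i, 0 < t s i)
    (heq : ∀ s i, (t s i) ^ 2 = ∑ j, Real.exp (s * φ i j) * t s j)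
    (P : ℝ → ℝ) (hP : ∀ s, P s = Real.log (∑ i, t s i))
    (αmin : ℝ) (hαmin : IsLeast (Set.range fun p : Fin m × Fin m => φ p.1 p.2) αmin)
    (Pm : ℝ) (hPm : Tendsto (deriv P) atBot (nhds Pm)) :
    αmin = Pm ↔
      ∃ (ℓ : ℕ) (c : ℕ → Fin m), 1 ≤ ℓ ∧ c 0 = c ℓ ∧
        ∀ k < ℓ, φ (c k) (c (k + 1)) = αmin := by
  have hm0 : 0 < m := by omega
  have hne : (univ : Finset (Fin m)).Nonempty := univ_nonempty_iff.2 ⟨⟨0, hm0⟩⟩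
  obtain ⟨β, hβ⟩ := AlphaMinAux.exists_bellman hne φ
  have hconv : ConvexOn ℝ Set.univ P :=
    AlphaMinAux.P_convex hm0 φ t ht heq hne β hβ P hP
  have hbnd := AlphaMinAux.P_bounds hm0 φ t ht heq hne β hβ P hP
  have hPmb : Pm = univ.inf' hne β := AlphaMinAux.Pm_eq hconv hbnd hPm
  have hlb : ∀ i j, αmin ≤ φ i j := fun i j => hαmin.2 ⟨(i, j), rfl⟩
  constructor
  · intro h
    apply AlphaMinAux.cycle_of_b_eq_alpha hne hβ hlb
    rw [← hPmb, ← h]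
  · rintro ⟨ℓ, c, hℓ, hc, hcyc⟩
    have h1 := AlphaMinAux.b_le_alpha_of_cycle hne hβ hlb ℓ c hℓ hc hcyc
    have h2 := AlphaMinAux.alpha_le_b hne hβ hlb
    rw [hPmb]
    linarith
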